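/- Let s ∈ [1,∞), and let (u_n) be a sequence in L^s(ℝ^N) such that for every r > 0, ∫_{B_r} |u_n|^s dx → ∫_{B_r} |u|^s dx as n → ∞, for some u ∈ L^s(ℝ^N). Then there exists a subsequence (u_{n_j}) such that for every σ > 0 there is r_σ > 0 with limsup_{j→∞} ∫_{B_j ∖ B_r} |u_{n_j}|^s dx ≤ σ for all r ≥ r_σ. -/

import Mathlib

open MeasureTheory Filter

/-- Vanishing lemma: if `∫_{B_r}|u_n|^s → ∫_{B_r}|u|^s` for every `r > 0`, then some
subsequence `(u_{n_j})` satisfies: for every `σ > 0` there is `r_σ > 0` with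
`limsup_j ∫_{B_j ∖ B_r}|u_{n_j}|^s ≤ σ` for all `r ≥ r_σ`. -/
theorem vanishing_subsequence (N : ℕ) (s : ℝ) (hs : 1 ≤ s)
    (u : EuclideanSpace ℝ (Fin N) → ℝ) (un : ℕ → EuclideanSpace ℝ (Fin N) → ℝ)
    (hu : MemLp u (ENNReal.ofReal s) (volume : Measure (EuclideanSpace ℝ (Fin N))))
    (hun : ∀ n, MemLp (un n) (ENNReal.ofReal s)
      (volume : Measure (EuclideanSpace ℝ (Fin N))))
    (hconv : ∀ r : ℝ, 0 < r →
      Tendsto (fun n => ∫ x in Metric.ball (0 : EuclideanSpace ℝ (Fin N)) r, |un n x| ^ s)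
        atTop (nhds (∫ x in Metric.ball (0 : EuclideanSpace ℝ (Fin N)) r, |u x| ^ s))) :
    ∃ n : ℕ → ℕ, StrictMono n ∧ ∀ σ : ℝ, 0 < σ → ∃ rσ : ℝ, 0 < rσ ∧
      ∀ r : ℝ, rσ ≤ r →
        Filter.limsup (fun j : ℕ =>
            ∫ x in Metric.ball (0 : EuclideanSpace ℝ (Fin N)) (j : ℝ) \
                Metric.ball (0 : EuclideanSpace ℝ (Fin N)) r, |un (n j) x| ^ s)
          atTop ≤ σ := by
  have hs0 : (0:ℝ) < s := lt_of_lt_of_le one_pos hs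
  have hp0 : (ENNReal.ofReal s) ≠ 0 := by
    simp [ENNReal.ofReal_eq_zero, not_le, hs0]
  have hptop : (ENNReal.ofReal s) ≠ ⊤ := ENNReal.ofReal_ne_top
  have htoReal : (ENNReal.ofReal s).toReal = s := ENNReal.toReal_ofReal hs0.le
  have hInt : Integrable (fun x => |u x| ^ s)
      (volume : Measure (EuclideanSpace ℝ (Fin N))) := by
    have := hu.integrable_norm_rpow hp0 hptop
    simpa [htoReal, Real.norm_eq_abs] using this
  have hIntn : ∀ k, Integrable (fun x => |un k x| ^ s)
      (volume : Measure (EuclideanSpace ℝ (Fin N))) := by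
    intro k
    have := (hun k).integrable_norm_rpow hp0 hptop
    simpa [htoReal, Real.norm_eq_abs] using this
  have hP : ∀ j : ℕ, ∀ᶠ k in atTop,
      |(∫ x in Metric.ball (0:EuclideanSpace ℝ (Fin N)) (j:ℝ), |un k x| ^ s) -
       (∫ x in Metric.ball (0:EuclideanSpace ℝ (Fin N)) (j:ℝ), |u x| ^ s)| < 1/((j:ℝ)+1) := by
    intro j
    rcases Nat.eq_zero_or_pos j with hj | hj
    · subst hj
      simp [Metric.ball_zero]
    · have hjr : (0:ℝ) < j := by exact_mod_cast hj
      have hε : (0:ℝ) < 1/((j:ℝ)+1) := by positivity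
      obtain ⟨M, hM⟩ := Metric.tendsto_atTop.mp (hconv j hjr) (1/((j:ℝ)+1)) hε
      exact eventually_atTop.2 ⟨M, fun k hk => by simpa [Real.dist_eq] using hM k hk⟩
  obtain ⟨n, hmono, hn⟩ := Filter.extraction_forall_of_eventually hP
  refine ⟨n, hmono, ?_⟩
  intro σ hσ
  set I := ∫ x, |u x| ^ s with hI
  have hTend : Tendsto
      (fun m : ℕ => ∫ x in Metric.ball (0:EuclideanSpace ℝ (Fin N)) (m:ℝ), |u x| ^ s)
      atTop (nhds I) := by
    have hcov : (⋃ m : ℕ, Metric.ball (0:EuclideanSpace ℝ (Fin N)) (m:ℝ)) = Set.univ :=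
      Metric.iUnion_ball_nat 0
    have := MeasureTheory.tendsto_setIntegral_of_monotone
      (s := fun m : ℕ => Metric.ball (0:EuclideanSpace ℝ (Fin N)) (m:ℝ))
      (f := fun x => |u x| ^ s)
      (fun m => measurableSet_ball)
      (fun a b hab => Metric.ball_subset_ball (by exact_mod_cast hab))
      (by rw [hcov]; exact hInt.integrableOn)
    rwa [hcov, setIntegral_univ] at this
  obtain ⟨m₀, hm₀⟩ := (hTend.eventually (eventually_gt_nhds (show I - σ < I by linarith))).exists
  refine ⟨max (m₀:ℝ) 1, lt_of_lt_of_le one_pos (le_max_right _ _), ?_⟩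
  intro r hr
  have hr1 : (1:ℝ) ≤ r := le_trans (le_max_right _ _) hr
  have hr0 : (0:ℝ) < r := lt_of_lt_of_le one_pos hr1
  have hm0r : (m₀:ℝ) ≤ r := le_trans (le_max_left _ _) hr
  have hIr : I - σ < ∫ x in Metric.ball (0:EuclideanSpace ℝ (Fin N)) r, |u x| ^ s := by
    refine lt_of_lt_of_le hm₀ ?_
    refine setIntegral_mono_set hInt.integrableOn ?_ ?_
    · exact Filter.Eventually.of_forall fun x => Real.rpow_nonneg (abs_nonneg _) s
    · exact (Metric.ball_subset_ball hm0r).eventuallyLE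
  have hcobdd : IsCoboundedUnder (· ≤ ·) atTop (fun j : ℕ =>
      ∫ x in Metric.ball (0 : EuclideanSpace ℝ (Fin N)) (j : ℝ) \
          Metric.ball (0 : EuclideanSpace ℝ (Fin N)) r, |un (n j) x| ^ s) := by
    refine (Filter.isBoundedUnder_of ⟨0, fun j => ?_⟩).isCoboundedUnder_le
    exact integral_nonneg fun x => Real.rpow_nonneg (abs_nonneg _) s
  refine le_of_forall_pos_le_add ?_
  intro ε hε
  refine Filter.limsup_le_of_le hcobdd ?_
  have E1 : ∀ᶠ j : ℕ in atTop, 1/((j:ℝ)+1) ≤ ε/2 :=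
    tendsto_one_div_add_atTop_nhds_zero_nat.eventually (eventually_le_nhds (half_pos hε))
  have E2 : ∀ᶠ j : ℕ in atTop, r ≤ (j:ℝ) := by
    refine eventually_atTop.2 ⟨⌈r⌉₊, fun j hj => le_trans (Nat.le_ceil r) ?_⟩
    exact_mod_cast hj
  have E3 : ∀ᶠ j : ℕ in atTop,
      (∫ x in Metric.ball (0:EuclideanSpace ℝ (Fin N)) r, |u x| ^ s) - ε/2 <
      ∫ x in Metric.ball (0:EuclideanSpace ℝ (Fin N)) r, |un (n j) x| ^ s := by
    have := (hconv r hr0).comp hmono.tendsto_atTop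
    exact this.eventually (eventually_gt_nhds (sub_lt_self _ (half_pos hε)))
  filter_upwards [E1, E2, E3] with j h1 h2 h3
  have hsplit : (∫ x in Metric.ball (0 : EuclideanSpace ℝ (Fin N)) (j : ℝ) \
        Metric.ball (0 : EuclideanSpace ℝ (Fin N)) r, |un (n j) x| ^ s) =
      (∫ x in Metric.ball (0 : EuclideanSpace ℝ (Fin N)) (j : ℝ), |un (n j) x| ^ s) -
      (∫ x in Metric.ball (0 : EuclideanSpace ℝ (Fin N)) r, |un (n j) x| ^ s) :=
    MeasureTheory.integral_diff measurableSet_ball (hIntn _).integrableOn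
      (Metric.ball_subset_ball h2)
  have hle : (∫ x in Metric.ball (0:EuclideanSpace ℝ (Fin N)) (j:ℝ), |u x| ^ s) ≤ I :=
    setIntegral_le_integral hInt
      (Filter.Eventually.of_forall fun x => Real.rpow_nonneg (abs_nonneg _) s)
  have habs := hn j
  have h4 := abs_lt.mp habs
  rw [hsplit]
  linarith [h4.1, h4.2]
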